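/- A finite bounded lattice L is o.p.c. if and only if L is simple and satisfies Wille's property. -/

import Mathlib

universe u

/-- `IsPolyFn L n p` says that `p : (Fin n → L) → L` is an `n`-ary lattice polynomial
function on `L`. -/
inductive IsPolyFn (L : Type u) [Lattice L] (n : ℕ) : ((Fin n → L) → L) → Prop
  | proj (i : Fin n) : IsPolyFn L n fun x => x i
  | const (c : L) : IsPolyFn L n fun _ => c
  | sup {p q : (Fin n → L) → L} : IsPolyFn L n p → IsPolyFn L n q →
      IsPolyFn L n fun x => p x ⊔ q x
  | inf {p q : (Fin n → L) → L} : IsPolyFn L n p → IsPolyFn L n q →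
      IsPolyFn L n fun x => p x ⊓ q x

/-- `r` is a lattice congruence: an equivalence relation compatible with `⊔` and `⊓`. -/
def IsLatticeCongruence (L : Type u) [Lattice L] (r : L → L → Prop) : Prop :=
  Equivalence r ∧
    ∀ a b c d : L, r a b → r c d → r (a ⊔ c) (b ⊔ d) ∧ r (a ⊓ c) (b ⊓ d)

/-- A lattice is simple if its only congruences are equality and the all-relation. -/
def IsSimpleLattice (L : Type u) [Lattice L] : Prop :=
  ∀ r : L → L → Prop, IsLatticeCongruence L r →
    (∀ x y : L, r x y ↔ x = y) ∨ (∀ x y : L, r x y)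

/-- Wille's property: the only regressive join-homomorphisms `L → L` are the identity
and the constant map with value `⊥`. -/
def WilleProperty (L : Type u) [Lattice L] [BoundedOrder L] : Prop :=
  ∀ f : L → L, (∀ x, f x ≤ x) → (∀ x y, f (x ⊔ y) = f x ⊔ f y) →
    f = id ∨ f = fun _ => (⊥ : L)

/-- Unary lattice polynomial functions. -/
inductive IsUPoly (L : Type u) [Lattice L] : (L → L) → Prop
  | id' : IsUPoly L fun x => x
  | const (c : L) : IsUPoly L fun _ => c
  | sup {p q : L → L} : IsUPoly L p → IsUPoly L q → IsUPoly L fun x => p x ⊔ q x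
  | inf {p q : L → L} : IsUPoly L p → IsUPoly L q → IsUPoly L fun x => p x ⊓ q x

section Aux

variable {L : Type u} [Lattice L]

theorem IsUPoly.monotone {p : L → L} (hp : IsUPoly L p) : Monotone p := by
  induction hp with
  | id' => exact monotone_id
  | const c => exact monotone_const
  | sup _ _ ih1 ih2 => exact ih1.sup ih2
  | inf _ _ ih1 ih2 => exact ih1.inf ih2

theorem IsUPoly.comp {p q : L → L} (hp : IsUPoly L p) (hq : IsUPoly L q) :
    IsUPoly L fun x => p (q x) := by
  induction hp with
  | id' => exact hq
  | const c => exact IsUPoly.const c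
  | sup _ _ ih1 ih2 => exact IsUPoly.sup ih1 ih2
  | inf _ _ ih1 ih2 => exact IsUPoly.inf ih1 ih2

theorem isUPoly_finsetInf [OrderTop L] {ι : Type*} (s : Finset ι) (P : ι → L → L)
    (h : ∀ i ∈ s, IsUPoly L (P i)) : IsUPoly L fun t => s.inf fun i => P i t := by
  classical
  induction s using Finset.induction with
  | empty => simpa using IsUPoly.const (⊤ : L)
  | insert a s' hnot ih =>
    simp only [Finset.inf_insert]
    exact IsUPoly.inf (h a (Finset.mem_insert_self a s'))
      (ih fun i hi => h i (Finset.mem_insert_of_mem hi))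

theorem IsUPoly.toPoly {n : ℕ} {p : L → L} (hp : IsUPoly L p) (i : Fin n) :
    IsPolyFn L n fun x => p (x i) := by
  induction hp with
  | id' => exact IsPolyFn.proj i
  | const c => exact IsPolyFn.const c
  | sup _ _ ih1 ih2 => exact IsPolyFn.sup ih1 ih2
  | inf _ _ ih1 ih2 => exact IsPolyFn.inf ih1 ih2

theorem isPolyFn_finsetSup [OrderBot L] {n : ℕ} {ι : Type*} (s : Finset ι)
    (P : ι → (Fin n → L) → L) (h : ∀ i ∈ s, IsPolyFn L n (P i)) :
    IsPolyFn L n fun x => s.sup fun i => P i x := by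
  classical
  induction s using Finset.induction with
  | empty => simpa using IsPolyFn.const (⊥ : L)
  | insert a s' hnot ih =>
    simp only [Finset.sup_insert]
    exact IsPolyFn.sup (h a (Finset.mem_insert_self a s'))
      (ih fun i hi => h i (Finset.mem_insert_of_mem hi))

theorem isPolyFn_finsetInf [OrderTop L] {n : ℕ} {ι : Type*} (s : Finset ι)
    (P : ι → (Fin n → L) → L) (h : ∀ i ∈ s, IsPolyFn L n (P i)) :
    IsPolyFn L n fun x => s.inf fun i => P i x := by
  classical
  induction s using Finset.induction with
  | empty => simpa using IsPolyFn.const (⊤ : L)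
  | insert a s' hnot ih =>
    simp only [Finset.inf_insert]
    exact IsPolyFn.inf (h a (Finset.mem_insert_self a s'))
      (ih fun i hi => h i (Finset.mem_insert_of_mem hi))

/-- Polynomial functions preserve lattice congruences. -/
theorem IsPolyFn.congr_pres {r : L → L → Prop} (hr : IsLatticeCongruence L r) {n : ℕ}
    {p : (Fin n → L) → L} (hp : IsPolyFn L n p) {x y : Fin n → L}
    (h : ∀ i, r (x i) (y i)) : r (p x) (p y) := by
  induction hp with
  | proj i => exact h i
  | const c => exact hr.1.refl c
  | sup _ _ ih1 ih2 => exact (hr.2 _ _ _ _ ih1 ih2).1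
  | inf _ _ ih1 ih2 => exact (hr.2 _ _ _ _ ih1 ih2).2

/-- A regressive join-endomorphism is dominated by every polynomial. -/
theorem IsPolyFn.regressive_le [OrderBot L] {f : L → L} (hreg : ∀ x, f x ≤ x)
    (hmono : Monotone f) (hsup : ∀ x y, f (x ⊔ y) = f x ⊔ f y) {n : ℕ}
    {p : (Fin n → L) → L} (hp : IsPolyFn L n p) (x : Fin n → L) :
    f (p x) ≤ p fun i => f (x i) := by
  induction hp with
  | proj i => exact le_rfl
  | const c => exact hreg c
  | sup _ _ ih1 ih2 =>
    rename_i p' q' _ _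
    rw [hsup]
    exact sup_le_sup ih1 ih2
  | inf _ _ ih1 ih2 =>
    exact le_inf ((hmono inf_le_left).trans ih1) ((hmono inf_le_right).trans ih2)

variable [BoundedOrder L] [Finite L]

/-- Key separation lemma: Wille's property yields, for each `u < v`, a unary polynomial
mapping `u` to `⊥` and `v` to `⊤`. -/
theorem wille_separation (hw : WilleProperty L) {u v : L} (huv : u < v) :
    ∃ p, IsUPoly L p ∧ p u = ⊥ ∧ p v = ⊤ := by
  classical
  haveI : Fintype L := Fintype.ofFinite L
  set S : L → Set L := fun y => {x | ∃ p, IsUPoly L p ∧ p u = x ∧ p v = y} with hS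
  have hSclosed : ∀ y : L, ∀ x1 ∈ S y, ∀ x2 ∈ S y, x1 ⊓ x2 ∈ S y := by
    rintro y x1 ⟨p1, hp1, hpu1, hpv1⟩ x2 ⟨p2, hp2, hpu2, hpv2⟩
    exact ⟨fun t => p1 t ⊓ p2 t, IsUPoly.inf hp1 hp2, by simp only [hpu1, hpu2],
      by simp only [hpv1, hpv2, inf_idem]⟩
  have hSself : ∀ y : L, y ∈ S y := fun y => ⟨fun _ => y, IsUPoly.const y, rfl, rfl⟩
  have hne : ∀ y : L, (Finset.univ.filter (· ∈ S y)).Nonempty := fun y =>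
    ⟨y, by simpa using hSself y⟩
  set g : L → L := fun y => (Finset.univ.filter (· ∈ S y)).inf' (hne y) id with hg
  have hgmem : ∀ y : L, g y ∈ S y := fun y =>
    Finset.inf'_mem (S y) (hSclosed y) _ (hne y) id
      (fun i hi => (Finset.mem_filter.mp hi).2)
  have hgle : ∀ y x : L, x ∈ S y → g y ≤ x := fun y x hx =>
    Finset.inf'_le id (by simpa using hx)
  have hgreg : ∀ y : L, g y ≤ y := fun y => hgle y y (hSself y)
  have hgmono : Monotone g := by
    intro y y' hyy'
    obtain ⟨p, hp, hpu, hpv⟩ := hgmem y'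
    have : g y' ⊓ y ∈ S y :=
      ⟨fun t => p t ⊓ y, IsUPoly.inf hp (IsUPoly.const y), by simp only [hpu],
        by simp only [hpv, inf_eq_right.mpr hyy']⟩
    exact (hgle y _ this).trans inf_le_left
  have hgsup : ∀ y y' : L, g (y ⊔ y') = g y ⊔ g y' := by
    intro y y'
    refine le_antisymm ?_ (sup_le (hgmono le_sup_left) (hgmono le_sup_right))
    obtain ⟨p, hp, hpu, hpv⟩ := hgmem y
    obtain ⟨p', hp', hpu', hpv'⟩ := hgmem y'
    exact hgle _ _ ⟨fun t => p t ⊔ p' t, IsUPoly.sup hp hp',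
      by simp only [hpu, hpu'], by simp only [hpv, hpv']⟩
  rcases hw g hgreg hgsup with hid | hbot
  · exfalso
    have : g v ≤ u := hgle v u ⟨fun x => x, IsUPoly.id', rfl, rfl⟩
    rw [hid] at this
    exact absurd this huv.not_ge
  · obtain ⟨p, hp, hpu, hpv⟩ := hgmem ⊤
    refine ⟨p, hp, ?_, hpv⟩
    rw [hpu, hbot]

/-- Characteristic functions of principal filters are unary polynomials. -/
theorem wille_chi (hw : WilleProperty L) (b : L) :
    ∃ p, IsUPoly L p ∧ (∀ t, b ≤ t → p t = ⊤) ∧ ∀ t, ¬b ≤ t → p t = ⊥ := by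
  classical
  haveI : Fintype L := Fintype.ofFinite L
  have hch : ∀ y : L, ∃ p, IsUPoly L p ∧ p b = ⊤ ∧ (¬b ≤ y → p y = ⊥) := by
    intro y
    by_cases h : b ≤ y
    · exact ⟨fun _ => ⊤, IsUPoly.const ⊤, rfl, fun hn => absurd h hn⟩
    · have hlt : y < b ⊔ y :=
        lt_of_le_of_ne le_sup_right (fun he => h (le_sup_left.trans he.ge))
      obtain ⟨p, hp, hpu, hpv⟩ := wille_separation hw hlt
      refine ⟨fun t => p (t ⊔ y), hp.comp (IsUPoly.sup IsUPoly.id' (IsUPoly.const y)),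
        hpv, fun _ => ?_⟩
      simpa using hpu
  choose P hP1 hP2 hP3 using hch
  refine ⟨fun t => Finset.univ.inf fun y => P y t,
    isUPoly_finsetInf _ _ fun y _ => hP1 y, ?_, ?_⟩
  · intro t hbt
    have hb : Finset.univ.inf (fun y => P y b) = ⊤ :=
      (Finset.inf_eq_top_iff _ _).mpr fun y _ => hP2 y
    have : (⊤ : L) ≤ Finset.univ.inf fun y => P y t := by
      rw [← hb]
      exact Finset.inf_mono_fun fun y _ => (hP1 y).monotone hbt
    exact top_le_iff.mp this
  · intro t hbt
    refine le_bot_iff.mp ?_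
    exact (Finset.inf_le (Finset.mem_univ t)).trans_eq (hP3 t hbt)

end Aux

/-- A finite bounded lattice is order-polynomially complete iff it is simple and
satisfies Wille's property. -/
theorem finite_opc_iff_simple_and_wille (L : Type u) [Lattice L] [BoundedOrder L]
    [Finite L] :
    (∀ (n : ℕ) (f : (Fin n → L) → L), Monotone f → IsPolyFn L n f) ↔
      IsSimpleLattice L ∧ WilleProperty L := by
  classical
  constructor
  · intro h
    constructor
    · -- simplicity
      intro r hr
      by_cases heq : ∀ x y : L, r x y ↔ x = y
      · exact Or.inl heq
      · right
        push_neg at heq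
        obtain ⟨a, b, hab⟩ := heq
        have habr : r a b ∧ a ≠ b := by
          rcases hab with h1 | h2
          · exact h1
          · exact absurd (by rw [h2.2]; exact hr.1.refl b) h2.1
        obtain ⟨hrab, hne⟩ := habr
        set u := a ⊓ b
        set v := a ⊔ b
        have hruv : r u v := by
          have h1 : r (a ⊓ b) (b ⊓ b) := (hr.2 a b b b hrab (hr.1.refl b)).2
          have h2 : r (a ⊔ b) (b ⊔ b) := (hr.2 a b b b hrab (hr.1.refl b)).1
          rw [inf_idem] at h1
          rw [sup_idem] at h2
          exact hr.1.trans h1 (hr.1.symm h2)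
        have huv : u < v := by
          refine lt_of_le_of_ne inf_le_sup ?_
          intro he
          apply hne
          have ha : a ≤ b := le_sup_left.trans (he.ge.trans inf_le_right)
          have hb : b ≤ a := le_sup_right.trans (he.ge.trans inf_le_left)
          exact le_antisymm ha hb
        -- separating monotone (hence polynomial) function
        set G : (Fin 1 → L) → L := fun x => if v ≤ x 0 then (⊤ : L) else ⊥ with hG
        have hGmono : Monotone G := by
          intro x y hxy
          by_cases hx : v ≤ x 0
          · simp only [hG, if_pos hx, if_pos (hx.trans (hxy 0))]
            exact le_rfl
          · simp only [hG, if_neg hx]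
            exact bot_le
        have hGpoly := h 1 G hGmono
        have hbt : r ⊥ ⊤ := by
          have := hGpoly.congr_pres hr (x := fun _ => u) (y := fun _ => v)
            (fun _ => hruv)
          simpa [hG, if_pos (le_refl v), if_neg huv.not_ge] using this
        intro x y
        have hx : r x ⊤ := by
          have := (hr.2 ⊥ ⊤ x x hbt (hr.1.refl x)).1
          simpa using this
        have hy : r y ⊤ := by
          have := (hr.2 ⊥ ⊤ y y hbt (hr.1.refl y)).1
          simpa using this
        exact hr.1.trans hx (hr.1.symm hy)
    · -- Wille's property
      intro f hreg hsup
      by_cases hbot : f = fun _ => (⊥ : L)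
      · exact Or.inr hbot
      · left
        have hb : ∃ b, f b ≠ ⊥ := by
          by_contra hc
          push_neg at hc
          exact hbot (funext fun x => hc x)
        obtain ⟨b, hfb⟩ := hb
        have hmono : Monotone f := by
          intro x y hxy
          have := hsup x y
          rw [sup_eq_right.mpr hxy] at this
          rw [this]
          exact le_sup_left
        funext a
        show f a = a
        by_contra hne
        have hfa : f a < a := lt_of_le_of_ne (hreg a) hne
        set G : (Fin 1 → L) → L := fun x => if a ≤ x 0 then b else ⊥ with hG
        have hGmono : Monotone G := by
          intro x y hxy
          by_cases hx : a ≤ x 0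
          · simp only [hG, if_pos hx, if_pos (hx.trans (hxy 0))]
            exact le_rfl
          · simp only [hG, if_neg hx]
            exact bot_le
        have hGpoly := h 1 G hGmono
        have hle := hGpoly.regressive_le hreg hmono hsup (fun _ => a)
        have hnafa : ¬a ≤ f a := hfa.not_ge
        simp only [hG, if_pos (le_refl a), if_neg hnafa] at hle
        exact hfb (le_bot_iff.mp hle)
  · rintro ⟨-, hw⟩ n f hf
    haveI : Fintype L := Fintype.ofFinite L
    choose X hX hXtop hXbot using wille_chi hw
    set F : (Fin n → L) → L := fun x =>
      Finset.univ.sup fun a : Fin n → L =>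
        f a ⊓ Finset.univ.inf fun i : Fin n => X (a i) (x i) with hF
    have hFpoly : IsPolyFn L n F :=
      isPolyFn_finsetSup _ _ fun a _ =>
        IsPolyFn.inf (IsPolyFn.const (f a))
          (isPolyFn_finsetInf _ _ fun i _ => (hX (a i)).toPoly i)
    have hFf : F = f := by
      funext x
      refine le_antisymm ?_ ?_
      · refine Finset.sup_le fun a _ => ?_
        by_cases hax : ∀ i, a i ≤ x i
        · exact inf_le_left.trans (hf hax)
        · push_neg at hax
          obtain ⟨i, hi⟩ := hax
          have : (Finset.univ.inf fun i : Fin n => X (a i) (x i)) ≤ ⊥ :=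
            (Finset.inf_le (Finset.mem_univ i)).trans_eq (hXbot _ _ hi)
          exact (inf_le_right.trans this).trans bot_le
      · refine le_trans ?_ (Finset.le_sup (Finset.mem_univ x))
        have : (Finset.univ.inf fun i : Fin n => X (x i) (x i)) = ⊤ :=
          (Finset.inf_eq_top_iff _ _).mpr fun i _ => hXtop (x i) (x i) le_rfl
        rw [this, inf_top_eq]
    exact hFf ▸ hFpoly
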